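/- Under the hypotheses making the real case hold (F finite of characteristic 2, deg c < 2 deg b, t² + bt + c without rational roots and t² + bt + c having a root in F((1/x)) of positive degree), if a unit ε of R = F[x][t]/(t² + bt + c) has valuation |ε| = 1 (degree 0 as a Laurent series under the embedding R → F((1/x)) sending Δ to a root), then ε ∈ F*. -/

import Mathlib

open Polynomial

/-- The image of a polynomial in F((1/x)): evaluate at x = X⁻¹, where the
variable x corresponds to the Laurent series `single (-1) 1` of degree 1
(so that the degree of a Laurent series is minus its order). -/
noncomputable def polyToLaurentInv (F : Type) [Field F] (p : Polynomial F) :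
    LaurentSeries F :=
  Polynomial.aeval (HahnSeries.single (-1 : ℤ) (1 : F)) p

variable {F : Type} [Field F]

theorem algmap_single (a : F) :
    (algebraMap F (HahnSeries ℤ F)) a = HahnSeries.single (0 : ℤ) a := by
  have h : (algebraMap F (HahnSeries ℤ F)) a
      = HahnSeries.ofPowerSeries ℤ F (PowerSeries.C a) := rfl
  rw [h, HahnSeries.ofPowerSeries_C, HahnSeries.C_apply]

lemma polyToLaurentInv_coeff (p : Polynomial F) (n : ℤ) :
    (polyToLaurentInv F p).coeff n = if 0 ≤ -n then p.coeff (-n).toNat else 0 := by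
  induction p using Polynomial.induction_on' with
  | add p q hp hq =>
      have h : polyToLaurentInv F (p + q) = polyToLaurentInv F p + polyToLaurentInv F q := by
        simp [polyToLaurentInv, map_add]
      rw [h, HahnSeries.coeff_add, hp, hq]
      split <;> simp
  | monomial i a =>
      have h1 : polyToLaurentInv F (monomial i a) = HahnSeries.single (-(i : ℤ)) a := by
        rw [polyToLaurentInv, aeval_monomial, HahnSeries.single_pow, algmap_single,
          HahnSeries.single_mul_single]
        norm_num [smul_eq_mul]
      rw [h1, HahnSeries.coeff_single, Polynomial.coeff_monomial]
      by_cases h : n = -(i : ℤ)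
      · subst h; simp
      · rw [if_neg h]
        split
        · rw [if_neg]; omega
        · rfl

lemma polyToLaurentInv_ne_zero {p : Polynomial F} (hp : p ≠ 0) :
    polyToLaurentInv F p ≠ 0 := by
  intro h
  have h1 := polyToLaurentInv_coeff p (-(p.natDegree : ℤ))
  rw [h] at h1
  simp only [HahnSeries.coeff_zero, neg_neg, Int.toNat_natCast] at h1
  rw [if_pos (by positivity)] at h1
  exact Polynomial.leadingCoeff_ne_zero.mpr hp h1.symm

lemma polyToLaurentInv_injective : Function.Injective (polyToLaurentInv F) := by
  intro p q h
  by_contra hne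
  apply polyToLaurentInv_ne_zero (sub_ne_zero.mpr hne)
  show Polynomial.aeval _ (p - q) = 0
  rw [map_sub]
  exact sub_eq_zero.mpr h

lemma polyToLaurentInv_order {p : Polynomial F} (hp : p ≠ 0) :
    (polyToLaurentInv F p).order = -(p.natDegree : ℤ) := by
  have hne := polyToLaurentInv_ne_zero hp
  apply le_antisymm
  · apply HahnSeries.order_le_of_coeff_ne_zero (g := -(p.natDegree : ℤ))
    rw [polyToLaurentInv_coeff, if_pos (by omega)]
    simpa using Polynomial.leadingCoeff_ne_zero.mpr hp
  · have h := HahnSeries.coeff_order_eq_zero.not.mpr hne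
    rw [polyToLaurentInv_coeff] at h
    by_cases h0 : 0 ≤ -(polyToLaurentInv F p).order
    · rw [if_pos h0] at h
      have := Polynomial.le_natDegree_of_ne_zero h
      omega
    · rw [if_neg h0] at h; exact absurd rfl h
/-- Real case (F finite of char 2, deg c < 2 deg b, no rational roots, a root
Δ₀ of positive degree in F((1/x))): a unit ε = u + Δv of R whose image
in F((1/x)) has degree 0 (valuation |ε| = 1) is a nonzero constant. -/
theorem unit_of_valuation_one_is_constant
    (F : Type) [Field F] [Fintype F] [CharP F 2] (b c : Polynomial F)
    (hb : 1 ≤ b.natDegree) (hc : c ≠ 0) (hdeg : c.natDegree < 2 * b.natDegree)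
    (hnoroot : ∀ ρ : RatFunc F,
      ρ ^ 2 + algebraMap (Polynomial F) (RatFunc F) b * ρ
        + algebraMap (Polynomial F) (RatFunc F) c ≠ 0)
    (Δ₀ : LaurentSeries F)
    (hΔ : Δ₀ ^ 2 + polyToLaurentInv F b * Δ₀ + polyToLaurentInv F c = 0)
    (hΔpos : Δ₀.order < 0) :
    ∀ (f : Polynomial (Polynomial F)), f = X ^ 2 + C b * X + C c →
    ∀ u v : Polynomial F,
      IsUnit (AdjoinRoot.of f u + AdjoinRoot.root f * AdjoinRoot.of f v) →
      (polyToLaurentInv F u + Δ₀ * polyToLaurentInv F v).order = 0 →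
      ∃ a : F, a ≠ 0 ∧ u = C a ∧ v = 0  := by
  intro f hf u v hunit horder
  classical
  let φ : Polynomial F →+* LaurentSeries F :=
    (Polynomial.aeval (HahnSeries.single (-1 : ℤ) (1 : F)) :
      Polynomial F →ₐ[F] LaurentSeries F).toRingHom
  have hφ : ∀ p : Polynomial F, φ p = polyToLaurentInv F p := fun p => rfl
  have h2p : (2 : Polynomial F) = 0 := by
    have := CharP.cast_eq_zero (Polynomial F) 2
    simpa using this
  have h2 : (2 : LaurentSeries F) = 0 := by
    rw [← map_ofNat φ 2, h2p, map_zero]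
  have hΔ' : Δ₀ ^ 2 + φ b * Δ₀ + φ c = 0 := hΔ
  set Δ₁ : LaurentSeries F := Δ₀ + φ b with hΔ₁def
  have hΔ1 : Δ₁ ^ 2 + φ b * Δ₁ + φ c = 0 := by
    rw [hΔ₁def]
    linear_combination hΔ' + (Δ₀ * φ b + φ b * φ b) * h2
  have heval : ∀ Δ : LaurentSeries F, Δ ^ 2 + φ b * Δ + φ c = 0 →
      Polynomial.eval₂ φ Δ f = 0 := by
    intro Δ h
    rw [hf]
    simp only [eval₂_add, eval₂_mul, eval₂_pow, eval₂_X, eval₂_C]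
    linear_combination h
  let ψ₀ : AdjoinRoot f →+* LaurentSeries F := AdjoinRoot.lift φ Δ₀ (heval Δ₀ hΔ')
  let ψ₁ : AdjoinRoot f →+* LaurentSeries F := AdjoinRoot.lift φ Δ₁ (heval Δ₁ hΔ1)
  have hψ₀ : ∀ p q : Polynomial F,
      ψ₀ (AdjoinRoot.of f p + AdjoinRoot.root f * AdjoinRoot.of f q) = φ p + Δ₀ * φ q := by
    intro p q
    simp only [ψ₀, map_add, map_mul, AdjoinRoot.lift_of, AdjoinRoot.lift_root]
  have hψ₁ : ∀ p q : Polynomial F,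
      ψ₁ (AdjoinRoot.of f p + AdjoinRoot.root f * AdjoinRoot.of f q) = φ p + Δ₁ * φ q := by
    intro p q
    simp only [ψ₁, map_add, map_mul, AdjoinRoot.lift_of, AdjoinRoot.lift_root]
  have hNorm : ∀ p q : Polynomial F,
      (φ p + Δ₀ * φ q) * (φ p + Δ₁ * φ q) = φ (p ^ 2 + b * p * q + c * q ^ 2) := by
    intro p q
    simp only [map_add, map_mul, map_pow, hΔ₁def]
    linear_combination (φ q) ^ 2 * hΔ' + (φ p * Δ₀ * φ q - φ c * (φ q) ^ 2) * h2
  have hlt : (C b * X + C c : Polynomial (Polynomial F)).degree ≤ 1 := by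
    compute_degree
  have hfm : f.Monic := by
    rw [hf, show (X ^ 2 + C b * X + C c : Polynomial (Polynomial F))
        = X ^ 2 + (C b * X + C c) from by ring]
    exact Polynomial.monic_X_pow_add (n := 2) (lt_of_le_of_lt hlt (by norm_num))
  have hdf : f.degree = 2 := by
    rw [hf]; compute_degree!
  obtain ⟨w, hw⟩ := hunit.exists_right_inv
  obtain ⟨q, rfl⟩ := AdjoinRoot.mk_surjective w
  set r := q %ₘ f with hrdef
  have hdr : r.natDegree ≤ 1 := by
    by_cases hr0 : r = 0
    · simp [hr0]
    · have h1 : r.degree < 2 := hdf ▸ Polynomial.degree_modByMonic_lt q hfm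
      have h2n : r.natDegree < 2 :=
        (Polynomial.natDegree_lt_iff_degree_lt (n := 2) hr0).mpr (by exact_mod_cast h1)
      omega
  have hmk : AdjoinRoot.mk f q =
      AdjoinRoot.of f (r.coeff 0) + AdjoinRoot.root f * AdjoinRoot.of f (r.coeff 1) := by
    have h1 : r + f * (q /ₘ f) = q := Polynomial.modByMonic_add_div q f
    have h2r := Polynomial.eq_X_add_C_of_natDegree_le_one hdr
    calc AdjoinRoot.mk f q = AdjoinRoot.mk f (r + f * (q /ₘ f)) := by rw [h1]
      _ = AdjoinRoot.mk f r := by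
          rw [map_add, map_mul, AdjoinRoot.mk_self, zero_mul, add_zero]
      _ = _ := by
          conv_lhs => rw [h2r]
          simp only [map_add, map_mul, AdjoinRoot.mk_C, AdjoinRoot.mk_X]
          ring
  rw [hmk] at hw
  have he₀ := congrArg ψ₀ hw
  rw [map_mul, map_one, hψ₀ u v, hψ₀ (r.coeff 0) (r.coeff 1)] at he₀
  have he₁ := congrArg ψ₁ hw
  rw [map_mul, map_one, hψ₁ u v, hψ₁ (r.coeff 0) (r.coeff 1)] at he₁
  have key : φ ((u ^ 2 + b * u * v + c * v ^ 2) *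
      ((r.coeff 0) ^ 2 + b * (r.coeff 0) * (r.coeff 1) + c * (r.coeff 1) ^ 2)) = φ 1 := by
    rw [map_mul, map_one, ← hNorm u v, ← hNorm (r.coeff 0) (r.coeff 1)]
    linear_combination ((φ u + Δ₁ * φ v) * (φ (r.coeff 0) + Δ₁ * φ (r.coeff 1))) * he₀ + he₁
  have hNN' : (u ^ 2 + b * u * v + c * v ^ 2) *
      ((r.coeff 0) ^ 2 + b * (r.coeff 0) * (r.coeff 1) + c * (r.coeff 1) ^ 2) = 1 :=
    polyToLaurentInv_injective key
  have hNunit : IsUnit (u ^ 2 + b * u * v + c * v ^ 2) := IsUnit.of_mul_eq_one _ hNN'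
  obtain ⟨a₀, ha₀u, hCa⟩ := Polynomial.isUnit_iff.mp hNunit
  have ha₀ : a₀ ≠ 0 := ha₀u.ne_zero
  have hφN : φ (u ^ 2 + b * u * v + c * v ^ 2) = HahnSeries.single (0 : ℤ) a₀ := by
    rw [← hCa]
    show (Polynomial.aeval (HahnSeries.single (-1 : ℤ) (1 : F))) (C a₀) = _
    rw [aeval_C]
    exact algmap_single a₀
  have hmulne : (φ u + Δ₀ * φ v) * (φ u + Δ₁ * φ v) ≠ 0 := by
    rw [hNorm u v, hφN]
    exact HahnSeries.single_ne_zero ha₀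
  have he₀ne := left_ne_zero_of_mul hmulne
  have he₁ne := right_ne_zero_of_mul hmulne
  have horder0 : (φ u + Δ₀ * φ v).order = 0 := horder
  have horder1 : (φ u + Δ₁ * φ v).order = 0 := by
    have h := HahnSeries.order_mul he₀ne he₁ne
    rw [hNorm u v, hφN, HahnSeries.order_single ha₀, horder0] at h
    omega
  have hv : v = 0 := by
    by_contra hv
    have hbne : b ≠ 0 := fun h => by simp [h] at hb
    have hsum : (φ u + Δ₀ * φ v) + (φ u + Δ₁ * φ v) = φ b * φ v := by
      rw [hΔ₁def]; linear_combination (φ u + Δ₀ * φ v) * h2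
    have hne : (φ u + Δ₀ * φ v) + (φ u + Δ₁ * φ v) ≠ 0 := by
      rw [hsum]
      exact mul_ne_zero (polyToLaurentInv_ne_zero hbne) (polyToLaurentInv_ne_zero hv)
    have hOrd : ∀ p : Polynomial F, p ≠ 0 → (φ p).order = -(p.natDegree : ℤ) :=
      fun p hp => polyToLaurentInv_order hp
    have hNe : ∀ p : Polynomial F, p ≠ 0 → φ p ≠ 0 :=
      fun p hp => polyToLaurentInv_ne_zero hp
    have hmin := HahnSeries.min_order_le_order_add hne
    rw [horder0, horder1, hsum,
      HahnSeries.order_mul (hNe b hbne) (hNe v hv),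
      hOrd b hbne, hOrd v hv] at hmin
    simp only [min_self] at hmin
    omega
  subst hv
  have hCa2 : C a₀ = u ^ 2 := by rw [hCa]; ring
  have hune : u ≠ 0 := by
    intro h
    rw [h] at hCa2
    apply ha₀
    simpa using hCa2
  have hdeg0 : u.natDegree = 0 := by
    have h := congrArg Polynomial.natDegree hCa2
    rw [Polynomial.natDegree_C, Polynomial.natDegree_pow] at h
    omega
  refine ⟨u.coeff 0, ?_, Polynomial.eq_C_of_natDegree_eq_zero hdeg0, rfl⟩
  intro h
  apply hune
  rw [Polynomial.eq_C_of_natDegree_eq_zero hdeg0, h, map_zero]
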